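/- If the closed extension à corresponds to T : V → W by the universal parametrization and à (equivalently T) is injective, then on ran à one has Ã^{-1} = A_β^{-1} + T^{-1} ∘ pr_W, where pr_W is the orthogonal projection onto W. -/
import Mathlib


open scoped InnerProductSpace

/-- If the closed extension `Ã` corresponds to `T : V → W` by the universal
parametrization and `Ã` (equivalently `T`) is injective, then on `ran Ã` one has
`Ã⁻¹ = A_β⁻¹ + T⁻¹ ∘ pr_W`, where `pr_W = PW` is the orthogonal projection onto `W`:
for every `u ∈ D(Ã)` and `f = Ã u`, `Ã⁻¹ f = A_β⁻¹ f + T⁻¹ (PW f)`. -/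
theorem stmt_7
    {H : Type*} [NormedAddCommGroup H] [InnerProductSpace ℂ H] [CompleteSpace H]
    (D D' Dβ DAt : Submodule ℂ H) (hβD : Dβ ≤ D) (hAtD : DAt ≤ D)
    (A : D →ₗ[ℂ] H) (A' : D' →ₗ[ℂ] H)
    -- 0 ∈ ρ(A_β): bounded everywhere defined inverse Aβinv
    (Aβinv : H →L[ℂ] H)
    (h0ran : ∀ f : H, Aβinv f ∈ Dβ)
    (h0left : ∀ u : D, (u : H) ∈ Dβ → Aβinv (A u) = (u : H))
    (h0right : ∀ f : H, A ⟨Aβinv f, hβD (h0ran f)⟩ = f)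
    -- W : a closed subspace of Z′ = ker A_max′, with orthogonal projection PW
    (W : Submodule ℂ H) (hWclosed : IsClosed (W : Set H))
    (hWZ' : W ≤ (LinearMap.ker A').map D'.subtype)
    (PW : H →L[ℂ] H)
    (hPWmem : ∀ x : H, PW x ∈ W)
    (hPWfix : ∀ w ∈ W, PW w = w)
    (hPWorth : ∀ x : H, ∀ w ∈ W, ⟪x - PW x, w⟫_ℂ = 0)
    -- the operator T : V → W associated with Ã by Theorem 2.1
    (T : H →ₗ.[ℂ] H)
    (hTran : ∀ x : T.domain, T x ∈ W)
    (hTdom : ∀ x : H, x ∈ T.domain ↔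
      ∃ u : D, (u : H) ∈ DAt ∧ (u : H) - Aβinv (A u) = x)
    (hTval : ∀ (u : D), (u : H) ∈ DAt →
      ∀ hx : ((u : H) - Aβinv (A u)) ∈ T.domain,
        T ⟨(u : H) - Aβinv (A u), hx⟩ = PW (A u))
    (hchar : ∀ u : D, (u : H) ∈ DAt ↔
      ∃ hx : ((u : H) - Aβinv (A u)) ∈ T.domain,
        PW (A u) = T ⟨(u : H) - Aβinv (A u), hx⟩)
    -- Ã is injective
    (hinj : ∀ u : D, (u : H) ∈ DAt → A u = 0 → (u : H) = 0) :
    -- T is injective and Ã⁻¹ = A_β⁻¹ + T⁻¹ ∘ pr_W on ran Ã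
    (∀ x : T.domain, T x = 0 → (x : H) = 0) ∧
    (∀ u : D, (u : H) ∈ DAt →
      ∃ x : T.domain, T x = PW (A u) ∧ (u : H) = Aβinv (A u) + (x : H)) := by
  constructor
  · intro x hTx0
    obtain ⟨u, huDAt, hux⟩ := (hTdom (x : H)).mp x.2
    -- T x = PW (A u)
    have hx : ((u : H) - Aβinv (A u)) ∈ T.domain := hux ▸ x.2
    have hxeq : (⟨(u : H) - Aβinv (A u), hx⟩ : T.domain) = x := Subtype.ext hux
    have hPWAu : PW (A u) = 0 := by
      rw [← hTval u huDAt hx, hxeq, hTx0]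
    -- u' := u - Aβinv (A u)
    set uβ : D := ⟨Aβinv (A u), hβD (h0ran (A u))⟩ with huβ
    set u' : D := u - uβ with hu'
    have hAu' : A u' = 0 := by
      simp only [hu', map_sub]
      rw [h0right (A u), sub_self]
    have hu'x : (u' : H) = (x : H) := by
      simp only [hu', huβ, Submodule.coe_sub]
      exact hux
    have hAinv0 : Aβinv (A u') = 0 := by rw [hAu', map_zero]
    have hx' : ((u' : H) - Aβinv (A u')) ∈ T.domain := by
      rw [hAinv0, sub_zero, hu'x]; exact x.2
    have hmem : (u' : H) ∈ DAt := by
      refine (hchar u').mpr ⟨hx', ?_⟩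
      have : (⟨(u' : H) - Aβinv (A u'), hx'⟩ : T.domain) = x := by
        apply Subtype.ext
        show (u' : H) - Aβinv (A u') = (x : H)
        rw [hAinv0, sub_zero]; exact hu'x
      rw [this, hTx0, hAu', map_zero]
    have := hinj u' hmem hAu'
    rw [hu'x] at this
    exact this
  · intro u huDAt
    obtain ⟨hx, heq⟩ := (hchar u).mp huDAt
    exact ⟨⟨(u : H) - Aβinv (A u), hx⟩, heq.symm, by simp⟩
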